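/- arXiv:2501.17556 — 4 statements merged into one kernel-verified Lean document; each statement's English description precedes it below -/
import Mathlib

section
/- Let G be a simple graph on a finite vertex set V. Let an outer total preorder on V be given and, for each part P of the outer preorder, an inner total preorder on P, and let the combined preorder on V be the lexicographic refinement of the outer preorder by the inner preorders. If the outer preorder has width at most w_out and every inner preorder has width at most w_in, then the combined preorder has width at most 2 ^ (w_in + 3 * w_out). -/
lemma my_ncard_prod {α β : Type*} (s : Set α) (t : Set β) :
    (s ×ˢ t).ncard = s.ncard * t.ncard := by
  rw [← Nat.card_coe_set_eq, ← Nat.card_coe_set_eq, ← Nat.card_coe_set_eq,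
    Nat.card_congr (Equiv.Set.prod s t), Nat.card_prod]

lemma my_pair_le {α β γ δ : Type*} [Finite β] [Finite γ]
    (f : α → β) (g : α → γ) (h : β → γ → δ) (s : Set α) :
    ((fun v => h (f v) (g v)) '' s).ncard ≤ (f '' s).ncard * (g '' s).ncard := by
  have h1 : (fun v => h (f v) (g v)) '' s =
      (fun p : β × γ => h p.1 p.2) '' ((fun v => (f v, g v)) '' s) := by
    rw [← Set.image_comp]; rfl
  have h2 : (fun v => (f v, g v)) '' s ⊆ (f '' s) ×ˢ (g '' s) := by
    rintro _ ⟨v, hv, rfl⟩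
    exact ⟨⟨v, hv, rfl⟩, ⟨v, hv, rfl⟩⟩
  calc ((fun v => h (f v) (g v)) '' s).ncard
      ≤ ((fun v => (f v, g v)) '' s).ncard := by rw [h1]; exact Set.ncard_image_le (Set.toFinite _)
    _ ≤ ((f '' s) ×ˢ (g '' s)).ncard := Set.ncard_le_ncard h2 (Set.toFinite _)
    _ = (f '' s).ncard * (g '' s).ncard := my_ncard_prod _ _

lemma my_exists_max {α : Type*} (r : α → α → Prop)
    (htot : ∀ a b, r a b ∨ r b a)
    (htrans : ∀ a b c, r a b → r b c → r a c)
    (s : Finset α) (hs : s.Nonempty) : ∃ m ∈ s, ∀ x ∈ s, r x m := by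
  classical
  induction s using Finset.induction_on with
  | empty => simp at hs
  | @insert a s ha ih =>
    by_cases hse : s.Nonempty
    · obtain ⟨m, hm, hmax⟩ := ih hse
      rcases htot m a with h | h
      · exact ⟨a, Finset.mem_insert_self a s, by
          intro x hx
          rcases Finset.mem_insert.1 hx with rfl | hx
          · exact (htot x x).elim id id
          · exact htrans x m a (hmax x hx) h⟩
      · exact ⟨m, Finset.mem_insert_of_mem hm, by
          intro x hx
          rcases Finset.mem_insert.1 hx with rfl | hx
          · exact h
          · exact hmax x hx⟩
    · have : s = ∅ := Finset.not_nonempty_iff_eq_empty.1 hse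
      subst this
      exact ⟨a, Finset.mem_insert_self a ∅, by
        intro x hx
        rcases Finset.mem_insert.1 hx with rfl | hx
        · exact (htot x x).elim id id
        · simp at hx⟩

lemma my_arith (w_out w_in : ℕ) (h : 1 ≤ w_out) :
    w_out * w_out + w_out * w_in ≤ 2 ^ (w_in + 3 * w_out) := by
  obtain ⟨s, rfl⟩ := Nat.exists_eq_add_of_le h
  have h1 : 1 + s ≤ 2 ^ s := Nat.one_add_le_iff.2 (Nat.lt_two_pow_self (n := s))
  have h2 : w_in ≤ 2 ^ w_in := (Nat.lt_two_pow_self (n := w_in)).le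
  have e : w_in + 3 * (1 + s) = (w_in + (3 * s + 2)) + 1 := by ring
  rw [e, pow_succ, mul_two]
  have t1 : (1 + s) * (1 + s) ≤ 2 ^ (w_in + (3 * s + 2)) := by
    calc (1 + s) * (1 + s) ≤ 2 ^ s * 2 ^ s := Nat.mul_le_mul h1 h1
      _ = 2 ^ (s + s) := (pow_add 2 s s).symm
      _ ≤ 2 ^ (w_in + (3 * s + 2)) := Nat.pow_le_pow_right (by norm_num) (by omega)
  have t2 : (1 + s) * w_in ≤ 2 ^ (w_in + (3 * s + 2)) := by
    calc (1 + s) * w_in ≤ 2 ^ s * 2 ^ w_in := Nat.mul_le_mul h1 h2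
      _ = 2 ^ (s + w_in) := (pow_add 2 s w_in).symm
      _ ≤ 2 ^ (w_in + (3 * s + 2)) := Nat.pow_le_pow_right (by norm_num) (by omega)
  omega



/-- The external neighbourhood of a vertex `v` relative to a subset `X`:
the neighbours of `v` that lie outside `X`. -/
def extNbhd {V : Type*} (G : SimpleGraph V) (X : Set V) (v : V) : Set V :=
  {w | w ∉ X ∧ G.Adj v w}

/-- The rank of a subset `X` of vertices: the number of equivalence classes of `X`
under the relation identifying vertices with the same neighbourhood outside `X`,
i.e. the number of distinct external neighbourhoods of vertices of `X`. -/
noncomputable def rankOf {V : Type*} (G : SimpleGraph V) (X : Set V) : ℕ :=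
  Set.ncard (extNbhd G X '' X)

/-- If the outer total preorder has width at most `w_out` and each inner total preorder
(one on each part of the outer preorder) has width at most `w_in`, then the combined
(lexicographic) preorder has width at most `2 ^ (w_in + 3 * w_out)`. -/
theorem width_combined_preorder_le {V : Type*} [Fintype V] (G : SimpleGraph V)
    (outerLe innerLe : V → V → Prop) (w_out w_in : ℕ)
    -- the outer relation is a total preorder on `V`
    (houter_refl : ∀ v, outerLe v v)
    (houter_trans : ∀ u v w, outerLe u v → outerLe v w → outerLe u w)
    (houter_total : ∀ u v, outerLe u v ∨ outerLe v u)
    -- the inner relation is a total preorder on each part of the outer preorder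
    (hinner_refl : ∀ v, innerLe v v)
    (hinner_trans : ∀ u v w, (outerLe u v ∧ outerLe v u) → (outerLe v w ∧ outerLe w v) →
      innerLe u v → innerLe v w → innerLe u w)
    (hinner_total : ∀ u v, (outerLe u v ∧ outerLe v u) → innerLe u v ∨ innerLe v u)
    -- the outer preorder has width at most `w_out`
    (houter_width : ∀ D : Set V,
      (∀ v ∈ D, ∀ w, outerLe w v → w ∈ D) → rankOf G D ≤ w_out)
    -- on each part of the outer preorder, the inner preorder has width at most `w_in`
    (hinner_width : ∀ v₀ : V, ∀ D : Set V,
      D ⊆ {w | outerLe v₀ w ∧ outerLe w v₀} →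
      (∀ v ∈ D, ∀ w, (outerLe v₀ w ∧ outerLe w v₀) → innerLe w v → w ∈ D) →
      rankOf G D ≤ w_in) :
    -- every prefix of the combined preorder has rank at most `2 ^ (w_in + 3 * w_out)`
    ∀ D : Set V,
      (∀ v ∈ D, ∀ w,
        ((outerLe w v ∧ ¬ outerLe v w) ∨ ((outerLe w v ∧ outerLe v w) ∧ innerLe w v)) →
        w ∈ D) →
      rankOf G D ≤ 2 ^ (w_in + 3 * w_out) := by
  intro D hD
  by_cases hDne : D.Nonempty
  · -- pick a maximal element v₀ of D w.r.t. the outer preorder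
    obtain ⟨v₀, hv₀mem, hv₀max⟩ :=
      my_exists_max outerLe houter_total houter_trans (Set.toFinite D).toFinset
        (by simpa [Set.Finite.toFinset_nonempty] using hDne)
    rw [Set.Finite.mem_toFinset] at hv₀mem
    have hv₀max' : ∀ x ∈ D, outerLe x v₀ := fun x hx =>
      hv₀max x ((Set.Finite.mem_toFinset _).2 hx)
    set P : Set V := {w | outerLe v₀ w ∧ outerLe w v₀} with hP
    set A : Set V := {w | outerLe w v₀ ∧ ¬ outerLe v₀ w} with hA
    set A' : Set V := {w | outerLe w v₀} with hA'
    set Q : Set V := D ∩ P with hQ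
    -- basic inclusions
    have hAD : A ⊆ D := fun w hw => hD v₀ hv₀mem w (Or.inl ⟨hw.1, hw.2⟩)
    have hDA' : D ⊆ A' := fun v hv => hv₀max' v hv
    have hDAQ : D = A ∪ Q := by
      apply Set.Subset.antisymm
      · intro v hv
        by_cases h : outerLe v₀ v
        · exact Or.inr ⟨hv, h, hv₀max' v hv⟩
        · exact Or.inl ⟨hv₀max' v hv, h⟩
      · exact Set.union_subset hAD Set.inter_subset_left
    -- rank bounds on the three auxiliary sets
    have hrA : rankOf G A ≤ w_out := houter_width A (by
      rintro v ⟨hv1, hv2⟩ w hwv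
      refine ⟨houter_trans w v v₀ hwv hv1, fun hcon => hv2 ?_⟩
      exact houter_trans v₀ w v hcon hwv)
    have hrA' : rankOf G A' ≤ w_out := houter_width A' (fun v hv w hwv =>
      houter_trans w v v₀ hwv hv)
    have hrQ : rankOf G Q ≤ w_in := hinner_width v₀ Q Set.inter_subset_right (by
      rintro v ⟨hvD, hvP⟩ w hwP hwv
      refine ⟨hD v hvD w (Or.inr ⟨⟨houter_trans w v₀ v hwP.2 hvP.1,
        houter_trans v v₀ w hvP.2 hwP.1⟩, hwv⟩), hwP⟩)
    -- the two decomposition identities for external neighbourhoods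
    have key : ∀ (B : Set V), B ⊆ A' → (∀ w, w ∈ P → w ∉ D → w ∉ B) → ∀ v : V,
        extNbhd G D v = extNbhd G A' v ∪ (extNbhd G B v ∩ (P \ D)) := by
      intro B hBA' hBdisj v
      ext w
      simp only [extNbhd, Set.mem_setOf_eq, Set.mem_union, Set.mem_inter_iff,
        Set.mem_diff]
      constructor
      · rintro ⟨hwD, hadj⟩
        by_cases hwA' : w ∈ A'
        · have hwP : w ∈ P := by
            have hwA : w ∉ A := fun h => hwD (hAD h)
            refine ⟨?_, hwA'⟩
            by_contra hcon
            exact hwA ⟨hwA', hcon⟩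
          exact Or.inr ⟨⟨hBdisj w hwP hwD, hadj⟩, hwP, hwD⟩
        · exact Or.inl ⟨hwA', hadj⟩
      · rintro (⟨hwA', hadj⟩ | ⟨⟨hwB, hadj⟩, hwP, hwD⟩)
        · exact ⟨fun h => hwA' (hDA' h), hadj⟩
        · exact ⟨hwD, hadj⟩
    -- specialise to B = A and B = Q
    have keyA : ∀ v : V, extNbhd G D v = extNbhd G A' v ∪ (extNbhd G A v ∩ (P \ D)) :=
      key A (fun w hw => hw.1) (fun w hwP _ hwA => hwA.2 hwP.1)
    have keyQ : ∀ v : V, extNbhd G D v = extNbhd G A' v ∪ (extNbhd G Q v ∩ (P \ D)) :=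
      key Q (fun w hw => hw.2.2) (fun w _ hwD hwQ => hwD hwQ.1)
    -- count
    have himg : extNbhd G D '' D = (extNbhd G D '' A) ∪ (extNbhd G D '' Q) := by
      rw [hDAQ, Set.image_union]
    have hcA : (extNbhd G D '' A).ncard ≤ w_out * w_out := by
      have : extNbhd G D '' A =
          (fun v => extNbhd G A' v ∪ (extNbhd G A v ∩ (P \ D))) '' A :=
        Set.image_congr (fun v _ => keyA v)
      rw [this]
      calc ((fun v => extNbhd G A' v ∪ (extNbhd G A v ∩ (P \ D))) '' A).ncard
          ≤ (extNbhd G A' '' A).ncard * (extNbhd G A '' A).ncard :=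
            my_pair_le (extNbhd G A') (extNbhd G A)
              (fun b c => b ∪ (c ∩ (P \ D))) A
        _ ≤ w_out * w_out := by
            refine Nat.mul_le_mul (le_trans ?_ hrA') hrA
            exact Set.ncard_le_ncard (Set.image_mono (fun w hw => hw.1))
              (Set.toFinite _)
    have hcQ : (extNbhd G D '' Q).ncard ≤ w_out * w_in := by
      have : extNbhd G D '' Q =
          (fun v => extNbhd G A' v ∪ (extNbhd G Q v ∩ (P \ D))) '' Q :=
        Set.image_congr (fun v _ => keyQ v)
      rw [this]
      calc ((fun v => extNbhd G A' v ∪ (extNbhd G Q v ∩ (P \ D))) '' Q).ncard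
          ≤ (extNbhd G A' '' Q).ncard * (extNbhd G Q '' Q).ncard :=
            my_pair_le (extNbhd G A') (extNbhd G Q)
              (fun b c => b ∪ (c ∩ (P \ D))) Q
        _ ≤ w_out * w_in := by
            refine Nat.mul_le_mul (le_trans ?_ hrA') hrQ
            exact Set.ncard_le_ncard (Set.image_mono (fun w hw => hw.2.2))
              (Set.toFinite _)
    have hwout1 : 1 ≤ w_out := by
      refine le_trans ?_ hrA'
      have hne : (extNbhd G A' '' A').Nonempty :=
        ⟨extNbhd G A' v₀, v₀, houter_refl v₀, rfl⟩
      exact (Set.ncard_pos (Set.toFinite _)).2 hne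
    calc rankOf G D = (extNbhd G D '' D).ncard := rfl
      _ ≤ (extNbhd G D '' A).ncard + (extNbhd G D '' Q).ncard := by
          rw [himg]; exact Set.ncard_union_le _ _
      _ ≤ w_out * w_out + w_out * w_in := Nat.add_le_add hcA hcQ
      _ ≤ 2 ^ (w_in + 3 * w_out) := my_arith w_out w_in hwout1
  · have : D = ∅ := Set.not_nonempty_iff_eq_empty.1 hDne
    subst this
    simp [rankOf, extNbhd]
end

section
/- Let α be a type, let H : α → α → Prop be a symmetric and irreflexive relation, and let 𝒪 be a nonempty set of orientations of H. Then the following are equivalent: (i) there exists an orientation R₀ of H such that every R ∈ 𝒪 equals R₀ or equals the opposite of R₀ (the relation flip R₀, i.e., (A, B) ↦ R₀ B A); (ii) every two H-pairs are oriented consistently across 𝒪, i.e., for all A B C D with H A B and H C D and all R, R' ∈ 𝒪, one has (R A B ↔ R C D) ↔ (R' A B ↔ R' C D). -/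
/-- `R` is an orientation of the relation `H`: for `H`-pairs exactly one of the two
directions of `R` holds, and for non-`H`-pairs neither holds. -/
def IsOrientation {α : Type*} (H R : α → α → Prop) : Prop :=
  (∀ A B : α, H A B → Xor' (R A B) (R B A)) ∧
  (∀ A B : α, ¬ H A B → ¬ R A B ∧ ¬ R B A)

/-- For a symmetric irreflexive relation `H` and a nonempty set `𝒪` of orientations of
`H`, the following are equivalent: (i) there is an orientation `R₀` of `H` such that
every member of `𝒪` is `R₀` or its opposite; (ii) every two `H`-pairs are oriented
consistently across `𝒪`. -/
theorem bipolar_iff_consistent {α : Type*} (H : α → α → Prop)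
    (hsymm : Symmetric H) (hirr : Irreflexive H)
    (𝒪 : Set (α → α → Prop)) (hne : 𝒪.Nonempty)
    (horient : ∀ R ∈ 𝒪, IsOrientation H R) :
    (∃ R₀ : α → α → Prop, IsOrientation H R₀ ∧
        ∀ R ∈ 𝒪, R = R₀ ∨ R = flip R₀) ↔
      (∀ A B C D : α, H A B → H C D → ∀ R ∈ 𝒪, ∀ R' ∈ 𝒪,
        ((R A B ↔ R C D) ↔ (R' A B ↔ R' C D))) := by
  constructor
  · rintro ⟨R₀, hR₀, hall⟩ A B C D hAB hCD R hR R' hR'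
    have key : ∀ S ∈ 𝒪, ((S A B ↔ S C D) ↔ (R₀ A B ↔ R₀ C D)) := by
      intro S hS
      rcases hall S hS with rfl | rfl
      · rfl
      · have h1 := hR₀.1 A B hAB
        have h2 := hR₀.1 C D hCD
        unfold Xor' Xor at h1 h2
        unfold flip
        tauto
    rw [key R hR, key R' hR']
  · intro hcons
    obtain ⟨R₁, hR₁⟩ := hne
    refine ⟨R₁, horient R₁ hR₁, fun R hR => ?_⟩
    have const : ∀ A B C D, H A B → H C D →
        ((R A B ↔ R₁ A B) ↔ (R C D ↔ R₁ C D)) := by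
      intro A B C D hAB hCD
      have := hcons A B C D hAB hCD R hR R₁ hR₁
      tauto
    by_cases hex : ∃ A B, H A B ∧ ¬ (R A B ↔ R₁ A B)
    · obtain ⟨A, B, hAB, hdis⟩ := hex
      right
      funext C D
      apply propext
      unfold flip
      by_cases hCD : H C D
      · have hdis' : ¬ (R C D ↔ R₁ C D) := fun h => hdis ((const A B C D hAB hCD).mpr h)
        have x1 := (horient R hR).1 C D hCD
        have x2 := (horient R₁ hR₁).1 C D hCD
        unfold Xor' Xor at x1 x2
        tauto
      · have n1 := (horient R hR).2 C D hCD
        have n2 := (horient R₁ hR₁).2 C D hCD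
        tauto
    · left
      push_neg at hex
      funext C D
      apply propext
      by_cases hCD : H C D
      · exact hex C D hCD
      · have n1 := (horient R hR).2 C D hCD
        have n2 := (horient R₁ hR₁).2 C D hCD
        tauto
end

section
/- Let (N, ≤) be a finite rooted tree, let C be a Strahler constraint on N, and let n be a natural number. Then either (1) there exists a subset S ⊆ N such that StrGe_S x n holds for some x ∈ S (the tree minor S has Strahler number at least n) and every pair of disjoint nodes of S satisfies C; or (2) there exists a split f : N → Fin n such that for all nodes x, y in the same layer of f, if x and y are disjoint then C x y does not hold. -/
/-- The relative Strahler predicate: `StrGe S x 0` holds iff `x ∈ S`, and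
`StrGe S x (n+1)` holds iff there are two incomparable elements of `S` below `x`,
each satisfying `StrGe S · n`. -/
def StrGe {N : Type*} [PartialOrder N] (S : Set N) : N → ℕ → Prop
  | x, 0 => x ∈ S
  | x, n + 1 => ∃ y ∈ S, ∃ z ∈ S, y ≤ x ∧ z ≤ x ∧ (¬ y ≤ z ∧ ¬ z ≤ y) ∧
      StrGe S y n ∧ StrGe S z n

/-- Two nodes are visible under a split `f` if they are comparable, have the same
`f`-value, and every node strictly between them has `f`-value at most theirs. -/
def Visible {N : Type*} [PartialOrder N] {n : ℕ} (f : N → Fin n) (x y : N) : Prop :=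
  (x ≤ y ∨ y ≤ x) ∧ f x = f y ∧
    ∀ z : N, ((x < z ∧ z < y) ∨ (y < z ∧ z < x)) → f z ≤ f x

section StrahlerAux

variable {N : Type*} [PartialOrder N]

lemma strGe_monoSet {S T : Set N} (hST : S ⊆ T) : ∀ (k : ℕ) (x : N), StrGe S x k → StrGe T x k
  | 0, _, h => hST h
  | k + 1, _, ⟨y, hy, z, hz, hyx, hzx, hinc, hy', hz'⟩ =>
      ⟨y, hST hy, z, hST hz, hyx, hzx, hinc, strGe_monoSet hST k y hy', strGe_monoSet hST k z hz'⟩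

lemma strGe_stepDown {S : Set N} {x : N} {k : ℕ} (h : StrGe S x (k + 1)) :
    ∃ y ∈ S, y ≤ x ∧ y ≠ x ∧ StrGe S y k := by
  obtain ⟨y, hy, z, hz, hyx, hzx, hinc, hy', _⟩ := h
  exact ⟨y, hy, hyx, fun h => hinc.2 (h ▸ hzx), hy'⟩

lemma strGe_trunc {S : Set N} {k : ℕ} : ∀ (d : ℕ) (s : N), s ∈ S → StrGe S s (k + d) →
    ∃ y ∈ S, y ≤ s ∧ StrGe S y k
  | 0, s, hs, h => ⟨s, hs, le_rfl, h⟩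
  | d + 1, s, hs, h => by
      obtain ⟨y, hy, hys, _, hy'⟩ := strGe_stepDown h
      obtain ⟨z, hz, hzy, hz'⟩ := strGe_trunc d y hy hy'
      exact ⟨z, hz, hzy.trans hys, hz'⟩

lemma strGe_card [Fintype N] {S : Set N} :
    ∀ (k : ℕ) (s : N), StrGe S s k → k < Set.ncard {t : N | t ≤ s}
  | 0, s, _ => (Set.ncard_pos (Set.toFinite _)).mpr ⟨s, le_rfl⟩
  | k + 1, s, h => by
      obtain ⟨y, _, hys, hne, hy'⟩ := strGe_stepDown h
      have h1 : k < Set.ncard {t : N | t ≤ y} := strGe_card k y hy'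
      have h2 : {t : N | t ≤ y} ⊂ {t : N | t ≤ s} := by
        constructor
        · exact fun t ht => le_trans ht hys
        · intro hsub
          exact hne (le_antisymm hys (hsub (le_refl s)))
      exact lt_of_le_of_lt h1 (Set.ncard_lt_ncard h2 (Set.toFinite _))

variable (C : N → N → Prop)

/-- The set of Strahler values realized by `C`-compatible subsets below `x`. -/
def strSet (x : N) : Set ℕ :=
  {k | ∃ S : Set N, (∀ a ∈ S, ∀ b ∈ S, (¬ a ≤ b ∧ ¬ b ≤ a) → C a b) ∧
      (∀ s ∈ S, s ≤ x) ∧ ∃ s ∈ S, StrGe S s k}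

/-- The relative Strahler value of `x`. -/
noncomputable def strVal (x : N) : ℕ := sSup (strSet C x)

lemma zero_mem_strSet (x : N) : 0 ∈ strSet C x := by
  refine ⟨{x}, ?_, ?_, x, rfl, rfl⟩
  · rintro a rfl b rfl ⟨h1, _⟩
    exact absurd le_rfl h1
  · rintro s rfl; exact le_rfl

lemma bddAbove_strSet [Fintype N] (x : N) : BddAbove (strSet C x) := by
  refine ⟨Set.ncard (Set.univ : Set N), ?_⟩
  rintro k ⟨S, _, _, s, _, hstr⟩
  exact le_trans (le_of_lt (strGe_card k s hstr))
    (Set.ncard_le_ncard (Set.subset_univ _) (Set.toFinite _))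

lemma strVal_mem [Fintype N] (x : N) : strVal C x ∈ strSet C x :=
  Nat.sSup_mem ⟨0, zero_mem_strSet C x⟩ (bddAbove_strSet C x)

lemma le_strVal [Fintype N] {x : N} {k : ℕ} (h : k ∈ strSet C x) : k ≤ strVal C x :=
  le_csSup (bddAbove_strSet C x) h

lemma strVal_mono [Fintype N] {x y : N} (hxy : x ≤ y) : strVal C x ≤ strVal C y := by
  obtain ⟨S, hG, hb, hw⟩ := strVal_mem C x
  exact le_strVal C ⟨S, hG, fun s hs => (hb s hs).trans hxy, hw⟩

/-- The combination lemma: two incomparable related nodes with equal Strahler value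
force a higher value at any common upper bound. -/
lemma strVal_combine [Fintype N]
    (hchain : ∀ x y z : N, x ≤ y → x ≤ z → y ≤ z ∨ z ≤ y)
    (hCsymm : ∀ x y, C x y → C y x)
    (hCdown : ∀ x y y', C x y → y' ≤ y → C x y')
    {x y u : N} (hC : C x y) (hxy : ¬ x ≤ y) (hyx : ¬ y ≤ x)
    (hxu : x ≤ u) (hyu : y ≤ u) (hval : strVal C y = strVal C x) :
    strVal C x + 1 ≤ strVal C u := by
  obtain ⟨Sx, hGx, hbx, sx, hsx, hstrx⟩ := strVal_mem C x
  obtain ⟨Sy, hGy, hby, sy, hsy, hstry⟩ := strVal_mem C y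
  rw [hval] at hstry
  set k := strVal C x with hk
  -- the combined set
  set T : Set N := Sx ∪ Sy ∪ {u} with hT
  have hbT : ∀ s ∈ T, s ≤ u := by
    rintro s (( hs | hs) | rfl)
    · exact (hbx s hs).trans hxu
    · exact (hby s hs).trans hyu
    · exact le_rfl
  -- cross compatibility
  have hcross : ∀ a ∈ Sx, ∀ b ∈ Sy, C a b := by
    intro a ha b hb
    exact hCsymm _ _ (hCdown _ _ _ (hCsymm _ _ (hCdown _ _ _ hC (hby b hb))) (hbx a ha))
  have hGT : ∀ a ∈ T, ∀ b ∈ T, (¬ a ≤ b ∧ ¬ b ≤ a) → C a b := by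
    rintro a ha b hb ⟨h1, h2⟩
    rcases ha with (ha | ha) | rfl
    · rcases hb with (hb | hb) | rfl
      · exact hGx a ha b hb ⟨h1, h2⟩
      · exact hcross a ha b hb
      · exact absurd (hbT a (Or.inl (Or.inl ha))) h1
    · rcases hb with (hb | hb) | rfl
      · exact hCsymm _ _ (hcross b hb a ha)
      · exact hGy a ha b hb ⟨h1, h2⟩
      · exact absurd (hbT a (Or.inl (Or.inr ha))) h1
    · exact absurd (hbT b hb) h2
  -- the witnesses are incomparable
  have hinc : ¬ sx ≤ sy ∧ ¬ sy ≤ sx := by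
    constructor
    · intro h
      rcases hchain sx x y (hbx sx hsx) (h.trans (hby sy hsy)) with h' | h'
      · exact hxy h'
      · exact hyx h'
    · intro h
      rcases hchain sy y x (hby sy hsy) (h.trans (hbx sx hsx)) with h' | h'
      · exact hyx h'
      · exact hxy h'
  have hstr : StrGe T u (k + 1) := by
    refine ⟨sx, Or.inl (Or.inl hsx), sy, Or.inl (Or.inr hsy),
      (hbx sx hsx).trans hxu, (hby sy hsy).trans hyu, hinc, ?_, ?_⟩
    · exact strGe_monoSet (fun a ha => Or.inl (Or.inl ha)) k sx hstrx
    · exact strGe_monoSet (fun a ha => Or.inl (Or.inr ha)) k sy hstry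
  exact le_strVal C ⟨T, hGT, hbT, u, Or.inr rfl, hstr⟩

end StrahlerAux

/-- Strahler dichotomy: given a finite rooted tree with a Strahler constraint `C`
and `n : ℕ`, either there is a tree minor of Strahler number at least `n` in which
all disjoint pairs satisfy `C`, or there is a split of height `n` such that no
disjoint pair within a layer satisfies `C`. -/
theorem strahler_dichotomy {N : Type*} [Fintype N] [PartialOrder N]
    (root : N) (hroot : ∀ x : N, x ≤ root)
    (hchain : ∀ x y z : N, x ≤ y → x ≤ z → y ≤ z ∨ z ≤ y)
    (C : N → N → Prop)
    (hCsymm : ∀ x y, C x y → C y x)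
    (hCdisj : ∀ x y, C x y → ¬ x ≤ y ∧ ¬ y ≤ x)
    (hCdown : ∀ x y y', C x y → y' ≤ y → C x y')
    (n : ℕ) :
    (∃ S : Set N, ∃ x ∈ S, StrGe S x n ∧
        ∀ a ∈ S, ∀ b ∈ S, (¬ a ≤ b ∧ ¬ b ≤ a) → C a b) ∨
    (∃ f : N → Fin n, ∀ x y : N,
        Relation.ReflTransGen (Visible f) x y → (¬ x ≤ y ∧ ¬ y ≤ x) → ¬ C x y) := by
  classical
  by_cases hL : ∃ S : Set N, ∃ x ∈ S, StrGe S x n ∧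
      ∀ a ∈ S, ∀ b ∈ S, (¬ a ≤ b ∧ ¬ b ≤ a) → C a b
  · exact Or.inl hL
  right
  have hlt : ∀ x : N, strVal C x < n := by
    intro x
    by_contra h
    push_neg at h
    obtain ⟨S, hG, hb, s, hs, hstr⟩ := strVal_mem C x
    obtain ⟨d, hd⟩ := Nat.exists_eq_add_of_le h
    rw [hd] at hstr
    obtain ⟨y, hy, _, hy'⟩ := strGe_trunc d s hs hstr
    exact hL ⟨S, y, hy, hy', hG⟩
  set f : N → Fin n := fun x => ⟨strVal C x, hlt x⟩ with hf
  refine ⟨f, ?_⟩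
  intro x y hrel hdisj hC
  -- each visible step preserves strVal and comparability-or-bounded-join
  have key : ∀ b : N, Relation.ReflTransGen (Visible f) x b →
      strVal C b = strVal C x ∧
        ((x ≤ b ∨ b ≤ x) ∨ ∃ u, x ≤ u ∧ b ≤ u ∧ strVal C u ≤ strVal C x) := by
    intro b hb
    induction hb with
    | refl => exact ⟨rfl, Or.inl (Or.inl le_rfl)⟩
    | @tail b c _ hbc ih =>
      obtain ⟨hcomp, hfeq, _⟩ := hbc
      have hvaleq : strVal C b = strVal C c := congrArg Fin.val hfeq
      have hcx : strVal C c = strVal C x := hvaleq ▸ ih.1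
      refine ⟨hcx, ?_⟩
      rcases ih.2 with (hxb | hbx) | ⟨u, hxu, hbu, hu⟩
      · -- x ≤ b
        rcases hcomp with hbc' | hcb'
        · exact Or.inl (Or.inl (hxb.trans hbc'))
        · exact Or.inr ⟨b, hxb, hcb', le_of_eq ih.1⟩
      · -- b ≤ x
        rcases hcomp with hbc' | hcb'
        · rcases hchain b x c hbx hbc' with h' | h'
          · exact Or.inl (Or.inl h')
          · exact Or.inl (Or.inr h')
        · exact Or.inl (Or.inr (hcb'.trans hbx))
      · rcases hcomp with hbc' | hcb'
        · rcases hchain b c u hbc' hbu with h' | h'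
          · exact Or.inr ⟨u, hxu, h', hu⟩
          · exact Or.inl (Or.inl (hxu.trans h'))
        · exact Or.inr ⟨u, hxu, hcb'.trans hbu, hu⟩
  obtain ⟨hval, hcase⟩ := key y hrel
  rcases hcase with hcomp | ⟨u, hxu, hyu, hu⟩
  · rcases hcomp with h | h
    · exact hdisj.1 h
    · exact hdisj.2 h
  · have := strVal_combine C hchain hCsymm hCdown hC hdisj.1 hdisj.2 hxu hyu hval
    omega
end

section
/- Let (N, ≤) be a finite nonempty rooted tree and let n be a natural number. Then either StrGe_N x n holds for some x ∈ N (the tree has Strahler number at least n), or there exists a split f : N → Fin n such that any two nodes in the same layer of f are comparable (every layer is a chain). -/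
/-- For a finite nonempty rooted tree and `n : ℕ`, either the tree has Strahler number
at least `n`, or there is a split of height `n` whose layers are all chains. -/
theorem strahler_dichotomy_chains {N : Type*} [Fintype N] [Nonempty N] [PartialOrder N]
    (root : N) (hroot : ∀ x : N, x ≤ root)
    (hchain : ∀ x y z : N, x ≤ y → x ≤ z → y ≤ z ∨ z ≤ y)
    (n : ℕ) :
    (∃ x : N, StrGe (Set.univ : Set N) x n) ∨
    (∃ f : N → Fin n, ∀ x y : N,
        Relation.ReflTransGen (Visible f) x y → x ≤ y ∨ y ≤ x) := by
  classical
  by_cases H : ∃ x : N, StrGe (Set.univ : Set N) x n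
  · exact Or.inl H
  right
  push_neg at H
  have hn : 1 ≤ n := by
    by_contra h
    push_neg at h
    interval_cases n
    exact H (Classical.arbitrary N) (Set.mem_univ _)
  let str : N → ℕ := fun x => Nat.findGreatest (fun k => StrGe (Set.univ : Set N) x k) (n - 1)
  have hstrlt : ∀ x, str x < n := fun x =>
    lt_of_le_of_lt (Nat.findGreatest_le _) (by omega)
  have hstrGe : ∀ x, StrGe (Set.univ : Set N) x (str x) := fun x =>
    Nat.findGreatest_spec (Nat.zero_le _) (Set.mem_univ x)
  have hmax : ∀ x k, k ≤ n - 1 → StrGe (Set.univ : Set N) x k → k ≤ str x :=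
    fun x k hk h => Nat.le_findGreatest hk h
  refine ⟨fun x => ⟨str x, hstrlt x⟩, ?_⟩
  intro x y h
  suffices h' : (x ≤ y ∨ y ≤ x) ∧ str x = str y from h'.1
  induction h with
  | refl => exact ⟨Or.inl le_rfl, rfl⟩
  | @tail b c hxb hbc ih =>
    obtain ⟨hcomp, heq⟩ := ih
    obtain ⟨hbc', hfeq, -⟩ := hbc
    have heq2 : str b = str c := by simpa [Fin.ext_iff] using hfeq
    refine ⟨?_, heq.trans heq2⟩
    rcases hcomp with hxb' | hbx
    · rcases hbc' with hbc'' | hcb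
      · exact Or.inl (hxb'.trans hbc'')
      · by_contra hnc
        push_neg at hnc
        have hx : StrGe Set.univ x (str x) := hstrGe x
        have hc : StrGe Set.univ c (str x) := by
          rw [heq.trans heq2]; exact hstrGe c
        have hb : StrGe Set.univ b (str x + 1) :=
          ⟨x, Set.mem_univ x, c, Set.mem_univ c, hxb', hcb, ⟨hnc.1, hnc.2⟩, hx, hc⟩
        rcases eq_or_lt_of_le (Nat.succ_le_of_lt (hstrlt x)) with hEq | hlt
        · exact H b (hEq ▸ hb)
        · have h1 := hmax b (str x + 1) (by omega) hb
          omega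
    · rcases hbc' with hbc'' | hcb
      · exact hchain b x c hbx hbc''
      · exact Or.inr (hcb.trans hbx)
end
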